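/- Let T be an ergodic measure-preserving automorphism of a standard probability space (X, S, μ) and f : X → ℝ a Borel map. If the distributions of the random variables f(n, ·), n ≥ 1, are uniformly tight, then the recurrence set R(f) is nonempty. -/

import Mathlib

open MeasureTheory Filter Topology
open scoped ENNReal NNReal

noncomputable section

/-- The cocycle sums `f(n, x) = f(x) + f(Tx) + ⋯ + f(T^{n-1}x)` for `n ∈ ℕ`. -/
def birkhoff {X E : Type*} [AddCommMonoid E] (T : X → X) (f : X → E) (n : ℕ) (x : X) : E :=
  ∑ i ∈ Finset.range n, f (T^[i] x)

/-- A cocycle is recurrent if `liminf_{n → ∞} ‖f(n, x)‖ = 0` for a.e. `x`. -/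
def Recurrent {X E : Type*} [MeasurableSpace X] [NormedAddCommGroup E]
    (T : X → X) (f : X → E) (μ : Measure X) : Prop :=
  ∀ᵐ x ∂μ, Filter.liminf (fun n : ℕ => ‖birkhoff T f n x‖) Filter.atTop = 0

/-- The recurrence set `R(f) = {c : f - c is recurrent}`. -/
def recSet {X E : Type*} [MeasurableSpace X] [NormedAddCommGroup E]
    (T : X → X) (f : X → E) (μ : Measure X) : Set E :=
  {c | Recurrent T (fun x => f x - c) μ}

/-- The `n`-th power of the automorphism `T`, for `n : ℤ`. -/
def zIter {X : Type*} [MeasurableSpace X] (T : X ≃ᵐ X) (n : ℤ) (x : X) : X :=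
  if 0 ≤ n then (⇑T)^[n.toNat] x else (⇑T.symm)^[(-n).toNat] x

/-- The cocycle `f(n, x)` for `n : ℤ`: `f(n,x)` is the `n`-term Birkhoff sum for `n ≥ 0`,
and `f(n, x) = -f(-n, T^n x)` for `n < 0`. -/
def zcocycle {X E : Type*} [MeasurableSpace X] [AddCommGroup E] (T : X ≃ᵐ X) (f : X → E)
    (n : ℤ) (x : X) : E :=
  if 0 ≤ n then birkhoff (⇑T) f n.toNat x
  else - birkhoff (⇑T) f (-n).toNat (zIter T n x)

/-- The `n`-th power (`n : ℤ`) of the skew-product `T_f(x, g) = (Tx, f(x) + g)`,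
i.e. `T_f^n (x, g) = (T^n x, f(n, x) + g)`. -/
def zSkew {X E : Type*} [MeasurableSpace X] [AddCommGroup E] (T : X ≃ᵐ X) (f : X → E)
    (n : ℤ) (p : X × E) : X × E :=
  (zIter T n p.1, zcocycle T f n p.1 + p.2)

lemma birkhoff_add' {X : Type*} (T : X → X) (f : X → ℝ) (m n : ℕ) (x : X) :
    birkhoff T f (m + n) x = birkhoff T f m x + birkhoff T f n (T^[m] x) := by
  unfold birkhoff
  rw [Finset.sum_range_add]
  congr 1
  refine Finset.sum_congr rfl fun i _ => ?_
  rw [add_comm m i, Function.iterate_add_apply]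

lemma birkhoff_measurable {X : Type*} [MeasurableSpace X] {T : X → X} (hT : Measurable T)
    {f : X → ℝ} (hf : Measurable f) (n : ℕ) : Measurable (birkhoff T f n) := by
  unfold birkhoff
  exact Finset.measurable_sum _ fun i _ => hf.comp (hT.iterate i)

lemma sep_card {ε K : ℝ} (hε : 0 < ε) (v : ℕ → ℝ) (S : Finset ℕ)
    (hK : ∀ n ∈ S, |v n| ≤ K)
    (hsep : ∀ m ∈ S, ∀ n ∈ S, m ≠ n → ε ≤ |v n - v m|) :
    S.card ≤ (⌊2 * K / ε⌋.toNat + 1) := by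
  classical
  have hinj : Set.InjOn (fun n => ⌊(v n + K) / ε⌋) S := by
    intro m hm n hn h
    by_contra hne
    have hsep' := hsep m hm n hn hne
    simp only at h
    have hcast : ((⌊(v m + K) / ε⌋ : ℤ) : ℝ) = ((⌊(v n + K) / ε⌋ : ℤ) : ℝ) := by rw [h]
    have h1 : (v m + K) / ε - (v n + K) / ε < 1 := by
      have h2 := Int.lt_floor_add_one ((v m + K) / ε)
      have h3 := Int.floor_le ((v n + K) / ε)
      linarith
    have h1' : (v n + K) / ε - (v m + K) / ε < 1 := by
      have h2 := Int.lt_floor_add_one ((v n + K) / ε)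
      have h3 := Int.floor_le ((v m + K) / ε)
      linarith
    have habs : |(v n + K) / ε - (v m + K) / ε| < 1 := abs_sub_lt_iff.mpr ⟨h1', h1⟩
    have heq : (v n + K) / ε - (v m + K) / ε = (v n - v m) / ε := by ring
    rw [heq, abs_div, abs_of_pos hε] at habs
    have : (1 : ℝ) ≤ |v n - v m| / ε := (one_le_div hε).mpr hsep'
    linarith
  have hsub : S.image (fun n => ⌊(v n + K) / ε⌋) ⊆ Finset.Icc 0 ⌊2 * K / ε⌋ := by
    intro z hz
    obtain ⟨n, hn, rfl⟩ := Finset.mem_image.mp hz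
    have hvn := abs_le.mp (hK n hn)
    refine Finset.mem_Icc.mpr ⟨Int.floor_nonneg.mpr (div_nonneg (by linarith) hε.le), ?_⟩
    exact Int.floor_le_floor ((div_le_div_iff_of_pos_right hε).mpr (by linarith))
  calc S.card = (S.image (fun n => ⌊(v n + K) / ε⌋)).card :=
        (Finset.card_image_of_injOn hinj).symm
    _ ≤ (Finset.Icc 0 ⌊2 * K / ε⌋).card := Finset.card_le_card hsub
    _ = (⌊2 * K / ε⌋ + 1 - 0).toNat := Int.card_Icc _ _
    _ ≤ ⌊2 * K / ε⌋.toNat + 1 := by omega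

lemma vanish {X : Type*} [MeasurableSpace X]
    (μ : Measure X) [IsProbabilityMeasure μ] (T : X ≃ᵐ X)
    (hT : MeasurePreserving (⇑T) μ μ)
    (f : X → ℝ) (hf : Measurable f)
    (htight : ∀ δ : ℝ, 0 < δ → ∃ C : Set ℝ, IsCompact C ∧
      ∀ n : ℕ, 1 ≤ n → 1 - ENNReal.ofReal δ < μ.map (birkhoff (⇑T) f n) C)
    (ε : ℝ) (hε : 0 < ε) :
    μ {x | ∀ n : ℕ, 1 ≤ n → ε ≤ |birkhoff (⇑T) f n x|} = 0 := by
  classical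
  set A := {x | ∀ n : ℕ, 1 ≤ n → ε ≤ |birkhoff (⇑T) f n x|} with hA
  have hAmeas : MeasurableSet A := by
    have : A = ⋂ n : ℕ, {x | 1 ≤ n → ε ≤ |birkhoff (⇑T) f n x|} := by
      ext x; simp [hA, Set.mem_iInter]
    rw [this]
    refine MeasurableSet.iInter fun n => ?_
    by_cases hn : 1 ≤ n
    · simp only [hn, forall_const]
      exact measurableSet_le measurable_const (birkhoff_measurable T.measurable hf n).abs
    · simp only [hn, false_implies]; simp
  by_contra hA0
  have hAne : μ A ≠ ⊤ := measure_ne_top μ A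
  set a := (μ A).toReal with ha_def
  have ha : 0 < a := ENNReal.toReal_pos hA0 hAne
  obtain ⟨C, hC, hCt⟩ := htight (a / 2) (by positivity)
  obtain ⟨K, hKC⟩ := hC.isBounded.subset_closedBall 0
  have hofReal : ENNReal.ofReal (a / 2) = μ A / 2 := by
    rw [ENNReal.ofReal_div_of_pos (by norm_num), ENNReal.ofReal_toReal hAne]
    norm_num
  have hhalf_le_one : μ A / 2 ≤ 1 := le_trans (ENNReal.half_le_self) prob_le_one
  -- the "good" sets
  set s : ℕ → Set X := fun n => {x | |birkhoff (⇑T) f n x| ≤ K} with hs_def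
  have hsmeas : ∀ n, MeasurableSet (s n) :=
    fun n => measurableSet_le (birkhoff_measurable T.measurable hf n).abs measurable_const
  have hscompl : ∀ n : ℕ, 1 ≤ n → μ (s n)ᶜ ≤ μ A / 2 := by
    intro n hn
    have h1 : 1 - μ A / 2 < μ (s n) := by
      have hm : μ.map (birkhoff (⇑T) f n) C = μ (birkhoff (⇑T) f n ⁻¹' C) :=
        Measure.map_apply (birkhoff_measurable T.measurable hf n) hC.measurableSet
      have hsub : birkhoff (⇑T) f n ⁻¹' C ⊆ s n := by
        intro x hx
        have := hKC hx
        show |birkhoff (⇑T) f n x| ≤ K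
        simpa only [Metric.mem_closedBall, Real.dist_eq, sub_zero] using this
      calc 1 - μ A / 2 < μ.map (birkhoff (⇑T) f n) C := by rw [← hofReal]; exact hCt n hn
        _ = μ (birkhoff (⇑T) f n ⁻¹' C) := hm
        _ ≤ μ (s n) := measure_mono hsub
    have h2 : μ (s n)ᶜ = 1 - μ (s n) := by
      rw [measure_compl (hsmeas n) (measure_ne_top μ _), measure_univ]
    rw [h2]
    calc 1 - μ (s n) ≤ 1 - (1 - μ A / 2) := tsub_le_tsub_left h1.le 1
      _ = μ A / 2 := ENNReal.sub_sub_cancel ENNReal.one_ne_top hhalf_le_one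
  set D : ℕ → Set X := fun n => ((⇑T)^[n] ⁻¹' A) ∩ s n with hD_def
  have hDmeas : ∀ n, MeasurableSet (D n) :=
    fun n => ((T.measurable.iterate n) hAmeas).inter (hsmeas n)
  have hDlow : ∀ n : ℕ, 1 ≤ n → μ A / 2 ≤ μ (D n) := by
    intro n hn
    have hpre : μ ((⇑T)^[n] ⁻¹' A) = μ A :=
      (hT.iterate n).measure_preimage hAmeas.nullMeasurableSet
    have hsubset : (⇑T)^[n] ⁻¹' A ⊆ D n ∪ (s n)ᶜ := by
      intro x hx
      by_cases hxs : x ∈ s n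
      · exact Or.inl ⟨hx, hxs⟩
      · exact Or.inr hxs
    have : μ A ≤ μ (D n) + μ A / 2 := by
      calc μ A = μ ((⇑T)^[n] ⁻¹' A) := hpre.symm
        _ ≤ μ (D n ∪ (s n)ᶜ) := measure_mono hsubset
        _ ≤ μ (D n) + μ (s n)ᶜ := measure_union_le _ _
        _ ≤ μ (D n) + μ A / 2 := add_le_add le_rfl (hscompl n hn)
    have := tsub_le_iff_right.mpr this
    rwa [ENNReal.sub_half hAne] at this
  set M : ℕ := ⌊2 * K / ε⌋.toNat with hM
  -- pointwise count bound
  have hcount : ∀ (N : ℕ) (x : X),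
      ∑ n ∈ Finset.Icc 1 N, (D n).indicator (1 : X → ℝ≥0∞) x ≤ (M + 1 : ℕ) := by
    intro N x
    have : ∀ n ∈ Finset.Icc 1 N, (D n).indicator (1 : X → ℝ≥0∞) x
        = if x ∈ D n then 1 else 0 := fun n _ => Set.indicator_apply _ _ _
    rw [Finset.sum_congr rfl this, Finset.sum_boole]
    have hcard : ((Finset.Icc 1 N).filter (fun n => x ∈ D n)).card ≤ M + 1 := by
      refine sep_card hε (fun n => birkhoff (⇑T) f n x) _ ?_ ?_
      · intro n hn
        exact (Finset.mem_filter.mp hn).2.2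
      · intro m hm n hn hmn
        rcases lt_or_gt_of_ne hmn with h | h
        · have hmA : (⇑T)^[m] x ∈ A := (Finset.mem_filter.mp hm).2.1
          have hkey : birkhoff (⇑T) f n x - birkhoff (⇑T) f m x
              = birkhoff (⇑T) f (n - m) ((⇑T)^[m] x) := by
            have := birkhoff_add' (⇑T) f m (n - m) x
            rw [Nat.add_sub_cancel' h.le] at this
            rw [this]; ring
          rw [hkey]
          exact hmA (n - m) (by omega)
        · have hnA : (⇑T)^[n] x ∈ A := (Finset.mem_filter.mp hn).2.1
          have hkey : birkhoff (⇑T) f m x - birkhoff (⇑T) f n x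
              = birkhoff (⇑T) f (m - n) ((⇑T)^[n] x) := by
            have := birkhoff_add' (⇑T) f n (m - n) x
            rw [Nat.add_sub_cancel' h.le] at this
            rw [this]; ring
          rw [← abs_neg, neg_sub, hkey]
          exact hnA (m - n) (by omega)
    exact_mod_cast Nat.cast_le.mpr hcard
  -- summation bound
  have hsum : ∀ N : ℕ, (N : ℝ≥0∞) * (μ A / 2) ≤ (M + 1 : ℕ) := by
    intro N
    have h1 : (N : ℝ≥0∞) * (μ A / 2) ≤ ∑ n ∈ Finset.Icc 1 N, μ (D n) := by
      have := Finset.card_nsmul_le_sum (Finset.Icc 1 N) (fun n => μ (D n)) (μ A / 2)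
        (fun n hn => hDlow n (Finset.mem_Icc.mp hn).1)
      rwa [Nat.card_Icc, Nat.add_sub_cancel, nsmul_eq_mul] at this
    have h2 : ∑ n ∈ Finset.Icc 1 N, μ (D n) ≤ (M + 1 : ℕ) := by
      have heq : ∑ n ∈ Finset.Icc 1 N, μ (D n)
          = ∫⁻ x, ∑ n ∈ Finset.Icc 1 N, (D n).indicator (1 : X → ℝ≥0∞) x ∂μ := by
        rw [lintegral_finset_sum _ (fun n _ => measurable_one.indicator (hDmeas n))]
        exact Finset.sum_congr rfl fun n _ => (lintegral_indicator_one (hDmeas n)).symm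
      rw [heq]
      calc ∫⁻ x, ∑ n ∈ Finset.Icc 1 N, (D n).indicator (1 : X → ℝ≥0∞) x ∂μ
          ≤ ∫⁻ _, ((M + 1 : ℕ) : ℝ≥0∞) ∂μ := lintegral_mono fun x => hcount N x
        _ = (M + 1 : ℕ) := by rw [lintegral_const, measure_univ, mul_one]
    exact h1.trans h2
  -- contradiction
  have hhalf0 : μ A / 2 ≠ 0 := by
    simp only [ne_eq, ENNReal.div_eq_zero_iff]
    push_neg
    exact ⟨hA0, by norm_num⟩
  obtain ⟨N, hN⟩ := ENNReal.exists_nat_gt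
    (ENNReal.div_lt_top (show ((M + 1 : ℕ) : ℝ≥0∞) ≠ ⊤ by simp) hhalf0).ne
  have : (N : ℝ≥0∞) ≤ ((M + 1 : ℕ) : ℝ≥0∞) / (μ A / 2) :=
    (ENNReal.le_div_iff_mul_le (Or.inl hhalf0)
      (Or.inl (ne_top_of_le_ne_top ENNReal.one_ne_top hhalf_le_one))).mpr (hsum N)
  exact absurd this (not_le.mpr hN)

theorem stmt11 {X : Type*} [MeasurableSpace X] [StandardBorelSpace X]
    (μ : Measure X) [IsProbabilityMeasure μ] (T : X ≃ᵐ X) (hT : Ergodic (⇑T) μ)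
    (f : X → ℝ) (hf : Measurable f)
    (htight : ∀ δ : ℝ, 0 < δ → ∃ C : Set ℝ, IsCompact C ∧
      ∀ n : ℕ, 1 ≤ n → 1 - ENNReal.ofReal δ < μ.map (birkhoff (⇑T) f n) C) :
    (recSet (⇑T) f μ).Nonempty := by
  classical
  have hMP : MeasurePreserving (⇑T) μ μ := hT.toMeasurePreserving
  refine ⟨0, ?_⟩
  have hzero : (fun x => f x - (0 : ℝ)) = f := by funext x; simp
  show Recurrent (⇑T) (fun x => f x - 0) μ
  rw [hzero]
  -- the bad sets
  set A : ℝ → Set X := fun η => {x | ∀ n : ℕ, 1 ≤ n → η ≤ |birkhoff (⇑T) f n x|} with hA_def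
  have hAmeas : ∀ η : ℝ, MeasurableSet (A η) := by
    intro η
    have : A η = ⋂ n : ℕ, {x | 1 ≤ n → η ≤ |birkhoff (⇑T) f n x|} := by
      ext x; simp [hA_def, Set.mem_iInter]
    rw [this]
    refine MeasurableSet.iInter fun n => ?_
    by_cases hn : 1 ≤ n
    · simp only [hn, forall_const]
      exact measurableSet_le measurable_const (birkhoff_measurable T.measurable hf n).abs
    · simp only [hn, false_implies]; simp
  have hAnull : ∀ η : ℝ, 0 < η → μ (A η) = 0 := fun η hη =>
    vanish μ T hMP f hf htight η hη
  set bad : Set X := ⋃ (k : ℕ) (m : ℕ), (⇑T)^[m] ⁻¹' (A (1 / (k + 1))) with hbad_def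
  have hbadnull : μ bad = 0 := by
    refine measure_iUnion_null fun k => measure_iUnion_null fun m => ?_
    rw [(hMP.iterate m).measure_preimage (hAmeas _).nullMeasurableSet]
    exact hAnull _ (by positivity)
  have hae : ∀ᵐ x ∂μ, x ∉ bad := by
    rw [← MeasureTheory.measure_eq_zero_iff_ae_notMem] at *
    exact hbadnull
  filter_upwards [hae] with x hx
  -- x escapes the bad set: for all k m, there is a near-return
  have hret : ∀ k m : ℕ, ∃ n : ℕ, 1 ≤ n ∧
      ‖birkhoff (⇑T) f n ((⇑T)^[m] x)‖ < 1 / (k + 1) := by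
    intro k m
    have : (⇑T)^[m] x ∉ A (1 / (k + 1)) := by
      intro h
      exact hx (Set.mem_iUnion.mpr ⟨k, Set.mem_iUnion.mpr ⟨m, h⟩⟩)
    simp only [hA_def, Set.mem_setOf_eq, not_forall, not_le] at this
    obtain ⟨n, hn1, hn2⟩ := this
    exact ⟨n, hn1, by rwa [Real.norm_eq_abs]⟩
  -- inductive construction
  have hstep : ∀ (ε : ℝ), 0 < ε → ∀ j : ℕ, ∃ m : ℕ, j ≤ m ∧
      ‖birkhoff (⇑T) f m x‖ ≤ ε * (1 - (1/2 : ℝ) ^ j) := by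
    intro ε hε j
    induction j with
    | zero => exact ⟨0, le_refl 0, by simp [birkhoff]⟩
    | succ j ih =>
      obtain ⟨m, hm, hbound⟩ := ih
      obtain ⟨k, hk⟩ := exists_nat_one_div_lt (show (0:ℝ) < ε * (1/2) ^ (j+1) by positivity)
      obtain ⟨n, hn1, hn2⟩ := hret k m
      refine ⟨m + n, by omega, ?_⟩
      have hsplit := birkhoff_add' (⇑T) f m n x
      have htrig : ‖birkhoff (⇑T) f (m + n) x‖
          ≤ ‖birkhoff (⇑T) f m x‖ + ‖birkhoff (⇑T) f n ((⇑T)^[m] x)‖ := by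
        rw [hsplit]; exact norm_add_le _ _
      have hlt : ‖birkhoff (⇑T) f n ((⇑T)^[m] x)‖ < ε * (1/2) ^ (j+1) := by
        calc ‖birkhoff (⇑T) f n ((⇑T)^[m] x)‖ < 1 / (k + 1) := hn2
          _ < ε * (1/2) ^ (j+1) := by exact_mod_cast hk
      have heq : ε * (1 - (1/2 : ℝ) ^ j) + ε * (1/2) ^ (j+1) = ε * (1 - (1/2) ^ (j+1)) := by
        ring
      linarith
  have hfreq : ∀ (ε : ℝ), 0 < ε → ∀ j : ℕ, ∃ m : ℕ, j ≤ m ∧ ‖birkhoff (⇑T) f m x‖ < ε := by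
    intro ε hε j
    obtain ⟨m, hm, hb⟩ := hstep ε hε j
    refine ⟨m, hm, lt_of_le_of_lt hb ?_⟩
    have : (0:ℝ) < (1/2 : ℝ) ^ j := by positivity
    nlinarith
  -- compute the liminf
  rw [Filter.liminf_eq]
  set u : ℕ → ℝ := fun n => ‖birkhoff (⇑T) f n x‖ with hu
  set S : Set ℝ := {a | ∀ᶠ n in atTop, a ≤ u n} with hS
  have h0S : (0:ℝ) ∈ S := Filter.Eventually.of_forall fun n => norm_nonneg _
  have hub : ∀ a ∈ S, a ≤ 0 := by
    intro a haS
    by_contra hpos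
    push_neg at hpos
    obtain ⟨N, hN⟩ := Filter.eventually_atTop.mp haS
    obtain ⟨m, hm, hlt⟩ := hfreq a hpos N
    exact absurd (hN m hm) (not_le.mpr hlt)
  refine le_antisymm (csSup_le ⟨0, h0S⟩ hub) (le_csSup ⟨0, fun a ha => hub a ha⟩ h0S)
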